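/- Define J : L²_∘(T¹) × [0,1] → [0,∞] by J(v,s) = s^{-η}(∑_{m∈ℤ}|m|^{4s}|v̂(m)|²)^{1/2} for s > 0, J(0,0) = 0, and J(v,0) = +∞ for v ≠ 0, where η > 0 is fixed. Then J is sequentially lower semicontinuous on L²_∘(T¹) × [0,1] when L²_∘(T¹) carries the weak topology: if vⁿ ⇀ v weakly in L² and sₙ → s in [0,1], then J(v,s) ≤ liminf J(vⁿ,sₙ). -/

import Mathlib

open MeasureTheory AddCircle Filter
open scoped Real NNReal ENNReal InnerProductSpace Classical

instance : Fact (0 < 2 * Real.pi) := ⟨by positivity⟩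

/-- The adaptive-order fractional Laplacian functional
`J(v,s) = s^{-η} (∑_{m} |m|^{4s} |v̂(m)|²)^{1/2}` for `s > 0`, with `J(0,0) = 0` and
`J(v,0) = +∞` for `v ≠ 0`. -/
noncomputable def Jfrac (η : ℝ)
    (v : Lp ℂ 2 (haarAddCircle : Measure (AddCircle (2 * Real.pi)))) (s : ℝ) : ℝ≥0∞ :=
  if s = 0 then (if v = 0 then 0 else ⊤)
  else ENNReal.ofReal (s ^ (-η)) *
    (∑' m : ℤ, ENNReal.ofReal
        (|(m : ℝ)| ^ (4 * s) * ‖fourierCoeff (v : AddCircle (2 * Real.pi) → ℂ) m‖ ^ 2))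
      ^ ((2 : ℝ)⁻¹)

/-- Fourier coefficients of an `L²` element as inner products with the Fourier basis. -/
lemma fourierCoeff_eq_inner
    (w : Lp ℂ 2 (haarAddCircle : Measure (AddCircle (2 * Real.pi)))) (m : ℤ) :
    fourierCoeff (w : AddCircle (2 * Real.pi) → ℂ) m = ⟪(fourierBasis : HilbertBasis ℤ ℂ _) m, w⟫_ℂ := by
  rw [← fourierBasis_repr, fourierBasis.repr_apply_apply]

/-- Fatou's lemma for sums over `ℤ` in `ℝ≥0∞`. -/
lemma tsum_liminf_le_liminf_tsum (f : ℕ → ℤ → ℝ≥0∞) :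
    (∑' m : ℤ, liminf (fun n => f n m) atTop) ≤ liminf (fun n => ∑' m : ℤ, f n m) atTop := by
  have h := MeasureTheory.lintegral_liminf_le (μ := (Measure.count : Measure ℤ))
    (f := f) (u := atTop) (fun n => Measurable.of_discrete)
  simpa [MeasureTheory.lintegral_count] using h

/-- Representation of `Jfrac` with the prefactor folded into the sum, for positive `σ`. -/
lemma Jfrac_eq_of_pos (η : ℝ)
    (w : Lp ℂ 2 (haarAddCircle : Measure (AddCircle (2 * Real.pi)))) {σ : ℝ} (hσ : 0 < σ) :
    Jfrac η w σ = (∑' m : ℤ, ENNReal.ofReal ((σ ^ (-η)) ^ 2 *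
        (|(m : ℝ)| ^ (4 * σ) * ‖fourierCoeff (w : AddCircle (2 * Real.pi) → ℂ) m‖ ^ 2)))
      ^ ((2 : ℝ)⁻¹) := by
  have hσ' : 0 ≤ σ ^ (-η) := Real.rpow_nonneg hσ.le _
  simp only [Jfrac, if_neg hσ.ne']
  have hterm : ∀ m : ℤ, ENNReal.ofReal ((σ ^ (-η)) ^ 2 *
      (|(m : ℝ)| ^ (4 * σ) * ‖fourierCoeff (w : AddCircle (2 * Real.pi) → ℂ) m‖ ^ 2)) =
      ENNReal.ofReal ((σ ^ (-η)) ^ 2) * ENNReal.ofReal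
        (|(m : ℝ)| ^ (4 * σ) * ‖fourierCoeff (w : AddCircle (2 * Real.pi) → ℂ) m‖ ^ 2) := by
    intro m
    exact ENNReal.ofReal_mul (by positivity)
  rw [tsum_congr hterm, ENNReal.tsum_mul_left,
    ENNReal.mul_rpow_of_nonneg _ _ (by norm_num : (0:ℝ) ≤ (2:ℝ)⁻¹)]
  congr 1
  rw [← Real.rpow_two, ← ENNReal.ofReal_rpow_of_nonneg hσ' (by norm_num),
    ← ENNReal.rpow_mul]
  norm_num

/-- the functional `J` is sequentially lower semicontinuous on
`L²_∘(T¹) × [0,1]`, where `L²_∘(T¹)` carries the weak topology: if `vⁿ ⇀ v` weakly in `L²`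
(zero-mean functions) and `sₙ → s` in `[0,1]`, then `J(v,s) ≤ liminf J(vⁿ,sₙ)`. -/
theorem stmt4 (η : ℝ) (hη : 0 < η)
    (vn : ℕ → Lp ℂ 2 (haarAddCircle : Measure (AddCircle (2 * Real.pi))))
    (v : Lp ℂ 2 (haarAddCircle : Measure (AddCircle (2 * Real.pi))))
    (sn : ℕ → ℝ) (s : ℝ)
    (hvn0 : ∀ n, fourierCoeff (vn n : AddCircle (2 * Real.pi) → ℂ) 0 = 0)
    (hv0 : fourierCoeff (v : AddCircle (2 * Real.pi) → ℂ) 0 = 0)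
    (hsn : ∀ n, sn n ∈ Set.Icc (0 : ℝ) 1) (hs : s ∈ Set.Icc (0 : ℝ) 1)
    (hweak : ∀ φ : Lp ℂ 2 (haarAddCircle : Measure (AddCircle (2 * Real.pi))),
      Tendsto (fun n => ⟪φ, vn n⟫_ℂ) atTop (nhds ⟪φ, v⟫_ℂ))
    (hconv : Tendsto sn atTop (nhds s)) :
    Jfrac η v s ≤ liminf (fun n => Jfrac η (vn n) (sn n)) atTop := by
  classical
  have hcoeff : ∀ m : ℤ, Tendsto
      (fun n => fourierCoeff (vn n : AddCircle (2 * Real.pi) → ℂ) m) atTop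
      (nhds (fourierCoeff (v : AddCircle (2 * Real.pi) → ℂ) m)) := by
    intro m
    simp only [fourierCoeff_eq_inner]
    exact hweak _
  rcases eq_or_lt_of_le hs.1 with hs0 | hspos
  · -- case s = 0
    subst hs0
    by_cases hv : v = 0
    · simp [Jfrac, hv]
    · -- LHS is ⊤; show the liminf is ⊤ as well
      have hJtop : Jfrac η v 0 = ⊤ := by simp [Jfrac, hv]
      rw [hJtop, le_liminf_iff]
      intro K hK
      -- a nonzero Fourier coefficient of v
      obtain ⟨m₀, hm₀⟩ : ∃ m : ℤ,
          fourierCoeff (v : AddCircle (2 * Real.pi) → ℂ) m ≠ 0 := by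
        by_contra h
        push_neg at h
        apply hv
        have hrepr0 : fourierBasis.repr v = 0 := by
          apply lp.ext
          funext m
          simpa [fourierBasis_repr] using h m
        exact fourierBasis.repr.map_eq_zero_iff.mp hrepr0
      have hm₀0 : m₀ ≠ 0 := by
        intro h; exact hm₀ (h ▸ hv0)
      have habs : (1 : ℝ) ≤ |(m₀ : ℝ)| := by
        rw [← Int.cast_abs]
        exact_mod_cast Int.one_le_abs hm₀0
      set ε : ℝ := ‖fourierCoeff (v : AddCircle (2 * Real.pi) → ℂ) m₀‖ / 2 with hεdef
      have hε : 0 < ε := by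
        have : 0 < ‖fourierCoeff (v : AddCircle (2 * Real.pi) → ℂ) m₀‖ :=
          norm_pos_iff.mpr hm₀
        positivity
      set c₁ : ℝ≥0∞ := ENNReal.ofReal (ε ^ 2) ^ ((2 : ℝ)⁻¹) with hc₁def
      have hc₁0 : c₁ ≠ 0 := by
        have : (0 : ℝ≥0∞) < ENNReal.ofReal (ε ^ 2) := ENNReal.ofReal_pos.mpr (by positivity)
        exact (ENNReal.rpow_pos this ENNReal.ofReal_ne_top).ne'
      have hc₁top : c₁ ≠ ⊤ :=
        ENNReal.rpow_ne_top_of_nonneg (by norm_num) ENNReal.ofReal_ne_top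
      obtain ⟨M, hM0, hMK⟩ : ∃ M : ℝ, 0 < M ∧ K < ENNReal.ofReal M * c₁ := by
        have hKc : K / c₁ < ⊤ := ENNReal.div_lt_top hK.ne hc₁0
        refine ⟨(K / c₁).toReal + 1, by positivity, ?_⟩
        have h1 : K / c₁ < ENNReal.ofReal ((K / c₁).toReal + 1) := by
          conv_lhs => rw [← ENNReal.ofReal_toReal hKc.ne]
          exact (ENNReal.ofReal_lt_ofReal_iff (by positivity)).mpr
            (by linarith [ENNReal.toReal_nonneg (a := K / c₁)])
        rw [ENNReal.div_lt_iff (Or.inl hc₁0) (Or.inl hc₁top)] at h1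
        exact h1
      set δ : ℝ := M ^ (-η⁻¹) with hδdef
      have hδ : 0 < δ := Real.rpow_pos_of_pos hM0 _
      have hδM : ∀ t : ℝ, 0 < t → t ≤ δ → M ≤ t ^ (-η) := by
        intro t ht htδ
        have h1 : δ ^ (-η) ≤ t ^ (-η) :=
          Real.rpow_le_rpow_of_nonpos ht htδ (by linarith)
        have h2 : δ ^ (-η) = M := by
          rw [hδdef, ← Real.rpow_mul hM0.le]
          rw [show (-η⁻¹) * (-η) = η⁻¹ * η by ring, inv_mul_cancel₀ hη.ne',
            Real.rpow_one]
        linarith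
      have ev1 : ∀ᶠ n in atTop,
          ε ≤ ‖fourierCoeff (vn n : AddCircle (2 * Real.pi) → ℂ) m₀‖ := by
        have hnorm : Tendsto
            (fun n => ‖fourierCoeff (vn n : AddCircle (2 * Real.pi) → ℂ) m₀‖) atTop
            (nhds ‖fourierCoeff (v : AddCircle (2 * Real.pi) → ℂ) m₀‖) :=
          (hcoeff m₀).norm
        apply hnorm.eventually (eventually_ge_nhds ?_)
        rw [hεdef]
        have : 0 < ‖fourierCoeff (v : AddCircle (2 * Real.pi) → ℂ) m₀‖ :=
          norm_pos_iff.mpr hm₀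
        linarith
      have ev2 : ∀ᶠ n in atTop, sn n < δ := hconv.eventually (eventually_lt_nhds hδ)
      filter_upwards [ev1, ev2] with n h1 h2
      by_cases hn0 : sn n = 0
      · -- then vn n ≠ 0 and Jfrac = ⊤
        have hvnn : vn n ≠ 0 := by
          intro h0
          have : fourierCoeff (vn n : AddCircle (2 * Real.pi) → ℂ) m₀ = 0 := by
            rw [← fourierBasis_repr, h0]
            simp
          rw [this] at h1
          simp at h1
          linarith
        simp only [Jfrac, if_pos hn0, if_neg hvnn]
        exact hK
      · have hsnpos : 0 < sn n := lt_of_le_of_ne (hsn n).1 (Ne.symm hn0)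
        simp only [Jfrac, if_neg hn0]
        have hfac : ENNReal.ofReal M ≤ ENNReal.ofReal ((sn n) ^ (-η)) :=
          ENNReal.ofReal_le_ofReal (hδM _ hsnpos h2.le)
        have hsum : c₁ ≤ (∑' m : ℤ, ENNReal.ofReal
            (|(m : ℝ)| ^ (4 * sn n) *
              ‖fourierCoeff (vn n : AddCircle (2 * Real.pi) → ℂ) m‖ ^ 2)) ^ ((2 : ℝ)⁻¹) := by
          apply ENNReal.rpow_le_rpow ?_ (by norm_num)
          refine le_trans ?_ (ENNReal.le_tsum m₀)
          apply ENNReal.ofReal_le_ofReal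
          calc ε ^ 2 = 1 * ε ^ 2 := (one_mul _).symm
          _ ≤ |(m₀ : ℝ)| ^ (4 * sn n) *
              ‖fourierCoeff (vn n : AddCircle (2 * Real.pi) → ℂ) m₀‖ ^ 2 := by
            apply mul_le_mul (Real.one_le_rpow habs (by positivity))
              (pow_le_pow_left₀ hε.le h1 2) (by positivity) (by positivity)
        calc K < ENNReal.ofReal M * c₁ := hMK
        _ ≤ _ := mul_le_mul' hfac hsum
  · -- case 0 < s
    set u : ℕ → ℤ → ℝ≥0∞ := fun n m => ENNReal.ofReal ((sn n ^ (-η)) ^ 2 *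
        (|(m : ℝ)| ^ (4 * sn n) *
          ‖fourierCoeff (vn n : AddCircle (2 * Real.pi) → ℂ) m‖ ^ 2)) with hudef
    set U : ℤ → ℝ≥0∞ := fun m => ENNReal.ofReal ((s ^ (-η)) ^ 2 *
        (|(m : ℝ)| ^ (4 * s) *
          ‖fourierCoeff (v : AddCircle (2 * Real.pi) → ℂ) m‖ ^ 2)) with hUdef
    have hterm : ∀ m : ℤ, Tendsto (fun n => u n m) atTop (nhds (U m)) := by
      intro m
      by_cases hm : m = 0
      · subst hm
        have hu0 : ∀ n, u n 0 = 0 := by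
          intro n; simp [hudef, hvn0 n]
        have hU0 : U 0 = 0 := by simp [hUdef, hv0]
        rw [hU0]
        simpa [hu0] using (tendsto_const_nhds :
          Tendsto (fun _ : ℕ => (0:ℝ≥0∞)) atTop (nhds 0))
      · have habs : |(m : ℝ)| ≠ 0 := by
          simp only [ne_eq, abs_eq_zero, Int.cast_eq_zero]
          exact hm
        have h1 : Tendsto (fun n => sn n ^ (-η)) atTop (nhds (s ^ (-η))) :=
          Filter.Tendsto.comp (Real.continuousAt_rpow_const s (-η) (Or.inl hspos.ne')) hconv
        have h2 : Tendsto (fun n => |(m : ℝ)| ^ (4 * sn n)) atTop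
            (nhds (|(m : ℝ)| ^ (4 * s))) :=
          Filter.Tendsto.comp (Real.continuousAt_const_rpow habs) (hconv.const_mul 4)
        have h3 : Tendsto
            (fun n => ‖fourierCoeff (vn n : AddCircle (2 * Real.pi) → ℂ) m‖ ^ 2) atTop
            (nhds (‖fourierCoeff (v : AddCircle (2 * Real.pi) → ℂ) m‖ ^ 2)) :=
          ((hcoeff m).norm).pow 2
        exact (ENNReal.continuous_ofReal.tendsto _).comp ((h1.pow 2).mul (h2.mul h3))
    have key : (∑' m : ℤ, U m) ≤ liminf (fun n => ∑' m : ℤ, u n m) atTop := by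
      calc (∑' m : ℤ, U m) = ∑' m : ℤ, liminf (fun n => u n m) atTop :=
        tsum_congr fun m => ((hterm m).liminf_eq).symm
      _ ≤ _ := tsum_liminf_le_liminf_tsum u
    have hmono : Monotone (fun x : ℝ≥0∞ => x ^ ((2:ℝ)⁻¹)) :=
      fun a b h => ENNReal.rpow_le_rpow h (by norm_num)
    have hmap : (liminf (fun n => ∑' m : ℤ, u n m) atTop) ^ ((2:ℝ)⁻¹) =
        liminf (fun n => (∑' m : ℤ, u n m) ^ ((2:ℝ)⁻¹)) atTop := by
      have := hmono.map_liminf_of_continuousAt (F := atTop)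
        (fun n => ∑' m : ℤ, u n m) (ENNReal.continuous_rpow_const.continuousAt)
      simpa [Function.comp_def] using this
    have hev : ∀ᶠ n in atTop,
        (∑' m : ℤ, u n m) ^ ((2:ℝ)⁻¹) = Jfrac η (vn n) (sn n) := by
      filter_upwards [hconv.eventually (eventually_gt_nhds hspos)] with n hn
      exact (Jfrac_eq_of_pos η (vn n) hn).symm
    calc Jfrac η v s = (∑' m : ℤ, U m) ^ ((2:ℝ)⁻¹) := Jfrac_eq_of_pos η v hspos
    _ ≤ (liminf (fun n => ∑' m : ℤ, u n m) atTop) ^ ((2:ℝ)⁻¹) := hmono key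
    _ = liminf (fun n => (∑' m : ℤ, u n m) ^ ((2:ℝ)⁻¹)) atTop := hmap
    _ = liminf (fun n => Jfrac η (vn n) (sn n)) atTop := liminf_congr hev
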